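/- For every function ω : ℕ → ℝ with ω(n) → ∞ as n → ∞, there exist a sequence p̄ = (p(1), p(2), …) with 0 ≤ p(i) < 1 for all i and a first-order sentence ψ of the language L_+ such that ω(n)·∏_{i=1}^n (1 − p(i)) → ∞ as n → ∞, yet liminf_{n→∞} Prob(n,p̄;ψ) = 0 while limsup_{n→∞} Prob(n,p̄;ψ) = 1. -/

import Mathlib

open FirstOrder Filter

namespace RandomGraph

/-- The set of potential edges of a graph on `Fin n` (pairs `(v,w)` with `v < w`).
Vertex `v : Fin n` represents the number `v + 1` of the interval `[n] = {1, …, n}`. -/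
abbrev EdgeIdx (n : ℕ) := {e : Fin n × Fin n // e.1 < e.2}

/-- An outcome of the random graph on `[n]`: a choice of which potential edges are present. -/
abbrev Sample (n : ℕ) := EdgeIdx n → Bool

/-- Adjacency of two vertices (described by their values in `Fin n`) in the outcome `ω`. -/
def adjVal {n : ℕ} (ω : Sample n) (a b : ℕ) : Prop :=
  ∃ e : EdgeIdx n, ω e = true ∧
    ((e.1.1.val = a ∧ e.1.2.val = b) ∨ (e.1.1.val = b ∧ e.1.2.val = a))

/-- Adjacency of two vertices in the outcome `ω`. -/
def sampleAdj {n : ℕ} (ω : Sample n) (v w : Fin n) : Prop := adjVal ω v.val w.val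

/-- The probability of the outcome `ω` in the model `G(n, p̄)`: each pair of distinct
vertices at distance `d` is an edge with probability `p d`, independently.  (The value `p 0` is
never used, since distinct vertices are at distance at least 1.) -/
noncomputable def sampleWeight (p : ℕ → ℝ) {n : ℕ} (ω : Sample n) : ℝ :=
  ∏ e : EdgeIdx n,
    (if ω e then p (e.1.2.val - e.1.1.val) else 1 - p (e.1.2.val - e.1.1.val))

/-- The probability of the outcome `ω` in the circular model `C(n, p̄)`: vertices `v, w` are
adjacent with probability `p (min |v-w| (n - |v-w|))`, independently. -/
noncomputable def cWeight (p : ℕ → ℝ) {n : ℕ} (ω : Sample n) : ℝ :=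
  ∏ e : EdgeIdx n,
    (if ω e then p (min (e.1.2.val - e.1.1.val) (n - (e.1.2.val - e.1.1.val)))
      else 1 - p (min (e.1.2.val - e.1.1.val) (n - (e.1.2.val - e.1.1.val))))

open scoped Classical in
/-- The probability of the event `P` in the random graph `G(n, p̄)`. -/
noncomputable def Pr (p : ℕ → ℝ) (n : ℕ) (P : Sample n → Prop) : ℝ :=
  ∑ ω : Sample n, if P ω then sampleWeight p ω else 0

open scoped Classical in
/-- The probability of the event `P` in the circular random graph `C(n, p̄)`. -/
noncomputable def cPr (p : ℕ → ℝ) (n : ℕ) (P : Sample n → Prop) : ℝ :=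
  ∑ ω : Sample n, if P ω then cWeight p ω else 0

/-! ### The language `L` of graphs (also used as the language `L^c`) -/

/-- An outcome `ω` of the random graph, viewed as a structure of `FirstOrder.Language.graph`,
the language with a single binary adjacency predicate. -/
def graphStructure {n : ℕ} (ω : Sample n) : Language.graph.Structure (Fin n) where
  RelMap | .adj => fun x => sampleAdj ω (x 0) (x 1)

/-- Satisfaction of a sentence of the language `L` in the outcome `ω`. -/
def SatL {n : ℕ} (ω : Sample n) (ψ : Language.graph.Sentence) : Prop :=
  @Language.Sentence.Realize _ _ (graphStructure ω) ψ

/-- `Prob(n, p̄; ψ)` for a sentence `ψ` of the language `L`. -/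
noncomputable def ProbL (p : ℕ → ℝ) (n : ℕ) (ψ : Language.graph.Sentence) : ℝ :=
  Pr p n fun ω => SatL ω ψ

/-- The probability that `C(n, p̄)` satisfies a sentence `ψ` of the language `L^c = L`. -/
noncomputable def cProbL (p : ℕ → ℝ) (n : ℕ) (ψ : Language.graph.Sentence) : ℝ :=
  cPr p n fun ω => SatL ω ψ

/-! ### The language `L₊` -/

/-- The constants of the language `L₊`: the first element `1` and the last element `n`. -/
inductive plusFunc : ℕ → Type
  | one : plusFunc 0
  | last : plusFunc 0

/-- The relations of `L₊`: adjacency and successor. -/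
inductive plusRel : ℕ → Type
  | adj : plusRel 2
  | succ : plusRel 2

/-- The language `L₊` with adjacency, successor (`x = y + 1`), and constants `1` and `n`. -/
def Lplus : Language := ⟨plusFunc, plusRel⟩

/-- An outcome `ω` of the random graph on `[m+1]`, as an `L₊`-structure. -/
def plusStructure {m : ℕ} (ω : Sample (m + 1)) : Lplus.Structure (Fin (m + 1)) where
  funMap | .one => fun _ => 0 | .last => fun _ => Fin.last m
  RelMap
    | .adj => fun x => sampleAdj ω (x 0) (x 1)
    | .succ => fun x => (x 0).val = (x 1).val + 1

/-- `Prob(n, p̄; ψ)` for a sentence `ψ` of `L₊` (set to `0` in the irrelevant case `n = 0`,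
where the constants cannot be interpreted). -/
noncomputable def ProbPlus (p : ℕ → ℝ) : ℕ → Lplus.Sentence → ℝ
  | 0, _ => 0
  | (m + 1), ψ => Pr p (m + 1) fun ω => @Language.Sentence.Realize _ _ (plusStructure ω) ψ

/-! ### The language `L≤` -/

/-- The relations of `L≤`: adjacency and linear order. -/
inductive leRel : ℕ → Type
  | adj : leRel 2
  | le : leRel 2

/-- The language `L≤` with adjacency and a linear order. -/
def Lle : Language := ⟨fun _ => Empty, leRel⟩

/-- An outcome `ω` of the random graph on `[n]`, as an `L≤`-structure. -/
def leStructure {n : ℕ} (ω : Sample n) : Lle.Structure (Fin n) where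
  funMap := fun f _ => Empty.elim f
  RelMap
    | .adj => fun x => sampleAdj ω (x 0) (x 1)
    | .le => fun x => x 0 ≤ x 1

/-- Satisfaction of a sentence of `L≤` in the outcome `ω`. -/
def SatLe {n : ℕ} (ω : Sample n) (ψ : Lle.Sentence) : Prop :=
  @Language.Sentence.Realize _ _ (leStructure ω) ψ

/-- `Prob(n, p̄; ψ)` for a sentence `ψ` of `L≤`. -/
noncomputable def ProbLe (p : ℕ → ℝ) (n : ℕ) (ψ : Lle.Sentence) : ℝ :=
  Pr p n fun ω => SatLe ω ψ

/-! ### The circular languages `L₊^c` and `L≤^c` -/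

/-- The relations of `L₊^c`: adjacency and cyclic successor. -/
inductive plusCRel : ℕ → Type
  | adj : plusCRel 2
  | succ : plusCRel 2

/-- The language `L₊^c`, with adjacency and cyclic successor (`x = y + 1 (mod n)`). -/
def LplusC : Language := ⟨fun _ => Empty, plusCRel⟩

/-- An outcome `ω` of the circular random graph on `[n]`, as an `L₊^c`-structure. -/
def plusCStructure {n : ℕ} (ω : Sample n) : LplusC.Structure (Fin n) where
  funMap := fun f _ => Empty.elim f
  RelMap
    | .adj => fun x => sampleAdj ω (x 0) (x 1)
    | .succ => fun x => (x 0).val = ((x 1).val + 1) % n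

/-- The probability that `C(n, p̄)` satisfies a sentence `ψ` of the language `L₊^c`. -/
noncomputable def cProbPlus (p : ℕ → ℝ) (n : ℕ) (ψ : LplusC.Sentence) : ℝ :=
  cPr p n fun ω => @Language.Sentence.Realize _ _ (plusCStructure ω) ψ

/-- The relations of `L≤^c`: adjacency and the ternary clockwise-order predicate. -/
inductive cycRel : ℕ → Type
  | adj : cycRel 2
  | btw : cycRel 3

/-- The language `L≤^c`, with adjacency and the ternary clockwise-order predicate `C`. -/
def Lcyc : Language := ⟨fun _ => Empty, cycRel⟩

/-- `C(a, b, c)`: `a ≤ b ≤ c` holds after some cyclic permutation of `(a, b, c)`. -/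
def cyclicBtw {n : ℕ} (a b c : Fin n) : Prop :=
  (a ≤ b ∧ b ≤ c) ∨ (b ≤ c ∧ c ≤ a) ∨ (c ≤ a ∧ a ≤ b)

/-- An outcome `ω` of the circular random graph on `[n]`, as an `L≤^c`-structure. -/
def cycStructure {n : ℕ} (ω : Sample n) : Lcyc.Structure (Fin n) where
  funMap := fun f _ => Empty.elim f
  RelMap
    | .adj => fun x => sampleAdj ω (x 0) (x 1)
    | .btw => fun x => cyclicBtw (x 0) (x 1) (x 2)

/-- Satisfaction of a sentence of `L≤^c` in the outcome `ω`. -/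
def SatCyc {n : ℕ} (ω : Sample n) (ψ : Lcyc.Sentence) : Prop :=
  @Language.Sentence.Realize _ _ (cycStructure ω) ψ

/-- The probability that `C(n, p̄)` satisfies a sentence `ψ` of the language `L≤^c`. -/
noncomputable def cProbCyc (p : ℕ → ℝ) (n : ℕ) (ψ : Lcyc.Sentence) : ℝ :=
  cPr p n fun ω => SatCyc ω ψ



section Aux

open scoped Classical

lemma sum_prod_bool {α : Type*} [Fintype α] [DecidableEq α] (g : α → Bool → ℝ) :
    ∑ ω : α → Bool, ∏ a, g a (ω a) = ∏ a, (g a true + g a false) :=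
  calc ∑ ω : α → Bool, ∏ a, g a (ω a) = ∏ a, ∑ b, g a b := (Fintype.prod_sum _).symm
    _ = ∏ a, (g a true + g a false) := by simp

lemma Pr_congr {p : ℕ → ℝ} {n : ℕ} {P Q : Sample n → Prop} (h : ∀ ω, P ω ↔ Q ω) :
    Pr p n P = Pr p n Q := by
  unfold Pr
  exact Finset.sum_congr rfl fun ω _ => if_congr (h ω) rfl rfl

lemma Pr_false {p : ℕ → ℝ} {n : ℕ} {P : Sample n → Prop} (h : ∀ ω, ¬ P ω) :
    Pr p n P = 0 := by
  unfold Pr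
  exact Finset.sum_eq_zero fun ω _ => if_neg (h ω)

lemma Pr_edge (p : ℕ → ℝ) {n : ℕ} (e₀ : EdgeIdx n) :
    Pr p n (fun ω => ω e₀ = true) = p (e₀.1.2.val - e₀.1.1.val) := by
  classical
  set g : EdgeIdx n → Bool → ℝ := fun e b =>
    if e = e₀ then (if b then p (e.1.2.val - e.1.1.val) else 0)
    else (if b then p (e.1.2.val - e.1.1.val) else 1 - p (e.1.2.val - e.1.1.val)) with hg
  have key : ∀ ω : Sample n,
      (if ω e₀ = true then sampleWeight p ω else 0) = ∏ e, g e (ω e) := by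
    intro ω
    by_cases h : ω e₀ = true
    · rw [if_pos h]
      unfold sampleWeight
      refine Finset.prod_congr rfl fun e _ => ?_
      by_cases he : e = e₀
      · subst he; rw [hg]; simp [h]
      · rw [hg]; simp [he]
    · rw [if_neg h]
      refine (Finset.prod_eq_zero (Finset.mem_univ e₀) ?_).symm
      rw [hg]
      simp [h]
  have h1 : Pr p n (fun ω => ω e₀ = true) = ∑ ω : Sample n, ∏ e, g e (ω e) := by
    unfold Pr
    refine Finset.sum_congr rfl fun ω _ => ?_
    convert key ω
  rw [h1, sum_prod_bool]
  rw [Finset.prod_eq_single e₀]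
  · rw [hg]; simp
  · intro e _ he
    rw [hg]; simp [he]
  · simp


/-- The sentence `adj(1, n)` of `L₊`. -/
def adjOneLast : Lplus.Sentence :=
  Language.Relations.formula₂ plusRel.adj
    (Language.Constants.term plusFunc.one) (Language.Constants.term plusFunc.last)

lemma satAdjOneLast {m : ℕ} (ω : Sample (m + 1)) :
    (@Language.Sentence.Realize _ _ (plusStructure ω) adjOneLast) ↔ adjVal ω 0 m := by
  letI := plusStructure ω
  show sampleAdj ω 0 (Fin.last m) ↔ _
  rw [sampleAdj]
  rfl

lemma edge_iff {m : ℕ} (hm : 1 ≤ m) (ω : Sample (m + 1)) :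
    adjVal ω 0 m ↔ ω ⟨(0, Fin.last m), by
      simp only [Fin.lt_def, Fin.val_last, Fin.val_zero]; omega⟩ = true := by
  constructor
  · rintro ⟨e, he, (⟨ha, hb⟩ | ⟨ha, hb⟩)⟩
    · convert he using 2
      symm
      exact Subtype.ext (Prod.ext (Fin.ext ha) (Fin.ext hb))
    · exfalso
      have := e.2
      rw [Fin.lt_def, ha, hb] at this
      omega
  · intro h
    exact ⟨_, h, Or.inl ⟨rfl, by simp [Fin.last]⟩⟩

lemma probPlus_eq (p : ℕ → ℝ) {m : ℕ} (hm : 1 ≤ m) :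
    ProbPlus p (m + 1) adjOneLast = p m := by
  show Pr p (m + 1) _ = p m
  rw [Pr_congr (fun ω => (satAdjOneLast ω).trans (edge_iff hm ω)), Pr_edge]
  simp

lemma probPlus_one (p : ℕ → ℝ) : ProbPlus p 1 adjOneLast = 0 := by
  show Pr p 1 _ = 0
  refine Pr_false fun ω h => ?_
  rw [satAdjOneLast ω] at h
  obtain ⟨e, _, (⟨ha, hb⟩ | ⟨ha, hb⟩)⟩ := h <;>
  · have := e.2
    rw [Fin.lt_def, ha, hb] at this
    omega


end Aux

/-- For every function `w` tending to infinity there exist a sequence `p̄`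
with `0 ≤ p i < 1` and a sentence `ψ` of `L₊` such that `w n * ∏_{i=1}^n (1 - p i) → ∞`,
yet `liminf Prob(n, p̄; ψ) = 0` while `limsup Prob(n, p̄; ψ) = 1`. -/
theorem statement_5 (w : ℕ → ℝ) (hw : Tendsto w atTop atTop) :
    ∃ (p : ℕ → ℝ) (ψ : Lplus.Sentence),
      (∀ i, 0 ≤ p i ∧ p i < 1) ∧
      Tendsto (fun n : ℕ => w n * ∏ i ∈ Finset.Icc 1 n, (1 - p i)) atTop atTop ∧
      liminf (fun n => ProbPlus p n ψ) atTop = 0 ∧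
      limsup (fun n => ProbPlus p n ψ) atTop = 1 := by
  classical
  -- thresholds for w
  choose M hM using fun C : ℝ => eventually_atTop.mp (hw.eventually_ge_atTop C)
  set c : ℕ → ℝ := fun k => ((k + 1).factorial * (k + 1) : ℕ) with hc
  -- the sparse sequence N
  set N : ℕ → ℕ := fun k =>
    Nat.rec (max (M (c 0)) 2) (fun k ih => max (M (c (k + 1))) (ih + 2)) k with hNdef
  have hNsucc : ∀ k, N (k + 1) = max (M (c (k + 1))) (N k + 2) := fun k => rfl
  have hN0 : 2 ≤ N 0 := le_max_right _ _
  have hNstep : ∀ k, N k + 2 ≤ N (k + 1) := fun k => by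
    rw [hNsucc]; exact le_max_right _ _
  have hmono : StrictMono N := strictMono_nat_of_lt_succ fun k => by
    have := hNstep k; omega
  have hNge : ∀ k, k + 2 ≤ N k := by
    intro k
    induction k with
    | zero => simpa using hN0
    | succ k ih => have := hNstep k; omega
  have hNw : ∀ k n, N k ≤ n → c k ≤ w n := by
    intro k n hn
    rcases k with _ | k
    · exact hM (c 0) n (le_trans (le_max_left _ _) hn)
    · refine hM (c (k + 1)) n (le_trans ?_ hn)
      rw [hNsucc]; exact le_max_left _ _
  -- the sequence p
  set p : ℕ → ℝ := fun i =>
    if h : ∃ k, N k = i then 1 - 1 / ((h.choose : ℝ) + 1) else 0 with hpdef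
  have hp_range : ∀ k, p (N k) = 1 - 1 / ((k : ℝ) + 1) := by
    intro k
    have h : ∃ j, N j = N k := ⟨k, rfl⟩
    rw [hpdef]
    simp only [dif_pos h]
    rw [hmono.injective h.choose_spec]
  have hp_not : ∀ i, (∀ k, N k ≠ i) → p i = 0 := by
    intro i hi
    rw [hpdef]
    simp only [dif_neg (not_exists.mpr hi)]
  have hp01 : ∀ i, 0 ≤ p i ∧ p i < 1 := by
    intro i
    rw [hpdef]
    by_cases h : ∃ k, N k = i
    · simp only [dif_pos h]
      have h1 : (0 : ℝ) < (h.choose : ℝ) + 1 := by positivity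
      constructor
      · have : 1 / ((h.choose : ℝ) + 1) ≤ 1 := by
          rw [div_le_one h1]; linarith [Nat.cast_nonneg (α := ℝ) h.choose]
        linarith
      · have : 0 < 1 / ((h.choose : ℝ) + 1) := by positivity
        linarith
    · simp only [dif_neg h]; norm_num
  -- the product formula
  have key_prod : ∀ K n, N K ≤ n → n < N (K + 1) →
      ∏ i ∈ Finset.Icc 1 n, (1 - p i) = 1 / ((K + 1).factorial : ℝ) := by
    intro K n h1 h2
    have hsub : (Finset.range (K + 1)).image N ⊆ Finset.Icc 1 n := by
      intro x hx
      obtain ⟨k, hk, rfl⟩ := Finset.mem_image.mp hx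
      rw [Finset.mem_range] at hk
      rw [Finset.mem_Icc]
      constructor
      · have := hNge k; omega
      · exact le_trans (hmono.monotone (by omega)) h1
    have h3 : ∏ i ∈ Finset.Icc 1 n, (1 - p i) =
        ∏ i ∈ (Finset.range (K + 1)).image N, (1 - p i) := by
      symm
      refine Finset.prod_subset hsub fun x hx hnx => ?_
      have hpx : p x = 0 := by
        refine hp_not x fun k hk => ?_
        apply hnx
        refine Finset.mem_image.mpr ⟨k, Finset.mem_range.mpr ?_, hk⟩
        have hxn : x ≤ n := (Finset.mem_Icc.mp hx).2
        by_contra hkK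
        push_neg at hkK
        have : N (K + 1) ≤ N k := hmono.monotone hkK
        omega
      rw [hpx]; ring
    rw [h3, Finset.prod_image (fun a _ b _ h => hmono.injective h)]
    have h4 : ∀ k ∈ Finset.range (K + 1), 1 - p (N k) = 1 / ((k : ℝ) + 1) := by
      intro k _
      rw [hp_range k]; ring
    rw [Finset.prod_congr rfl h4, Finset.prod_div_distrib, Finset.prod_const_one]
    congr 1
    rw [← Finset.prod_range_add_one_eq_factorial (K + 1)]
    push_cast
    rfl
  -- the tendsto statement
  have htend : Tendsto (fun n : ℕ => w n * ∏ i ∈ Finset.Icc 1 n, (1 - p i)) atTop atTop := by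
    rw [tendsto_atTop]
    intro C
    rw [eventually_atTop]
    refine ⟨N ⌈C⌉₊, fun n hn => ?_⟩
    set K := Nat.findGreatest (fun k => N k ≤ n) n with hK
    have hceil_le : (⌈C⌉₊ : ℕ) ≤ n := le_trans (by have := hNge ⌈C⌉₊; omega) hn
    have hK1 : N K ≤ n :=
      Nat.findGreatest_spec (P := fun k => N k ≤ n) hceil_le hn
    have hKge : ⌈C⌉₊ ≤ K := Nat.le_findGreatest hceil_le hn
    have hK2 : n < N (K + 1) := by
      by_contra hcon
      push_neg at hcon
      have hkn : K + 1 ≤ n := le_trans (by have := hNge (K + 1); omega) hcon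
      have := Nat.le_findGreatest (P := fun k => N k ≤ n) hkn hcon
      omega
    rw [key_prod K n hK1 hK2]
    have hw1 : c K ≤ w n := hNw K n hK1
    have hfac : (0 : ℝ) < ((K + 1).factorial : ℝ) := by
      exact_mod_cast Nat.factorial_pos (K + 1)
    have : ((K : ℝ) + 1) ≤ w n * (1 / ((K + 1).factorial : ℝ)) := by
      rw [mul_one_div, le_div_iff₀ hfac]
      calc ((K : ℝ) + 1) * ((K + 1).factorial : ℝ)
          = c K := by rw [hc]; push_cast; ring
        _ ≤ w n := hw1
    calc C ≤ (⌈C⌉₊ : ℝ) := Nat.le_ceil C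
      _ ≤ (K : ℝ) + 1 := by exact_mod_cast le_trans hKge (Nat.le_succ K)
      _ ≤ _ := this
  -- values of the probability
  have hf_val : ∀ k, ProbPlus p (N k + 1) adjOneLast = 1 - 1 / ((k : ℝ) + 1) := by
    intro k
    have h2 : 1 ≤ N k := by have := hNge k; omega
    rw [probPlus_eq p h2, hp_range]
  have hf_zero : ∀ k, ProbPlus p (N k + 2) adjOneLast = 0 := by
    intro k
    have h2 : 1 ≤ N k + 1 := by omega
    have : ProbPlus p ((N k + 1) + 1) adjOneLast = p (N k + 1) := probPlus_eq p h2
    rw [show N k + 2 = (N k + 1) + 1 from rfl, this]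
    refine hp_not _ fun j hj => ?_
    rcases le_or_gt j k with h | h
    · have := hmono.monotone h; omega
    · have := le_trans (hNstep k) (hmono.monotone h); omega
  have hf_nonneg : ∀ n, 0 ≤ ProbPlus p n adjOneLast := by
    intro n
    rcases n with _ | _ | m
    · simp [ProbPlus]
    · rw [probPlus_one]
    · rw [probPlus_eq p (by omega : 1 ≤ m + 1)]
      exact (hp01 (m + 1)).1
  have hf_le_one : ∀ n, ProbPlus p n adjOneLast ≤ 1 := by
    intro n
    rcases n with _ | _ | m
    · simp [ProbPlus]
    · rw [probPlus_one]; norm_num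
    · rw [probPlus_eq p (by omega : 1 ≤ m + 1)]
      exact le_of_lt (hp01 (m + 1)).2
  have hbdd_le : IsBoundedUnder (· ≤ ·) atTop (fun n => ProbPlus p n adjOneLast) :=
    isBoundedUnder_of ⟨1, hf_le_one⟩
  have hbdd_ge : IsBoundedUnder (· ≥ ·) atTop (fun n => ProbPlus p n adjOneLast) :=
    isBoundedUnder_of ⟨0, fun n => hf_nonneg n⟩
  refine ⟨p, adjOneLast, hp01, htend, ?_, ?_⟩
  · -- liminf = 0
    refine le_antisymm ?_ ?_
    · refine liminf_le_of_frequently_le ?_ hbdd_ge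
      rw [frequently_atTop]
      intro b
      refine ⟨N b + 2, by have := hNge b; omega, ?_⟩
      rw [hf_zero b]
    · exact le_liminf_of_le hbdd_le.isCoboundedUnder_ge
        (Eventually.of_forall hf_nonneg)
  · -- limsup = 1
    refine le_antisymm ?_ ?_
    · exact limsup_le_of_le hbdd_ge.isCoboundedUnder_le
        (Eventually.of_forall hf_le_one)
    · have hstep : ∀ k : ℕ, 1 - 1 / ((k : ℝ) + 1) ≤
          limsup (fun n => ProbPlus p n adjOneLast) atTop := by
        intro k
        refine le_limsup_of_frequently_le ?_ hbdd_le
        rw [frequently_atTop]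
        intro b
        refine ⟨N (max k b) + 1, by have := hNge (max k b); omega, ?_⟩
        rw [hf_val (max k b)]
        have h1 : (0:ℝ) < (k : ℝ) + 1 := by positivity
        have h2 : (k : ℝ) + 1 ≤ ((max k b : ℕ) : ℝ) + 1 := by
          have h3 : (k : ℝ) ≤ ((max k b : ℕ) : ℝ) := by exact_mod_cast le_max_left k b
          linarith
        have := one_div_le_one_div_of_le h1 h2
        linarith
      have htendk : Tendsto (fun k : ℕ => 1 - 1 / ((k : ℝ) + 1)) atTop (nhds 1) := by
        have h0 : Tendsto (fun k : ℕ => 1 / ((k : ℝ) + 1)) atTop (nhds 0) :=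
          tendsto_one_div_add_atTop_nhds_zero_nat
        simpa using (tendsto_const_nhds :
          Tendsto (fun _ : ℕ => (1:ℝ)) atTop (nhds 1)).sub h0
      exact le_of_tendsto htendk (Eventually.of_forall hstep)


end RandomGraph
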